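/- One-step descent with a mixed gradient estimate (key inequality in the proof of Theorem 1). Let G > 0, let η > 0 satisfy η·L ≤ 1, let b ∈ [0, 1], and let w, gₐ, g_b ∈ E with ‖∇F(w)‖ ≤ G and ‖g_b‖ ≤ G. Then for g = (1 − b)·gₐ + b·g_b, F(w − η·g) ≤ (1 − η·μ)·F(w) + (η/2)·((1 − b)·‖∇F(w) − gₐ‖² + 4·b·G²). -/

import Mathlib

open InnerProductSpace

theorem descent_lemma
    {E : Type*} [NormedAddCommGroup E] [InnerProductSpace ℝ E] [CompleteSpace E]
    (F : E → ℝ) (L : ℝ) (hL : 0 ≤ L)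
    (hdiff : Differentiable ℝ F)
    (hlip : ∀ w u : E, ‖gradient F w - gradient F u‖ ≤ L * ‖w - u‖)
    (w v : E) :
    F (w + v) ≤ F w + ⟪gradient F w, v⟫_ℝ + L / 2 * ‖v‖ ^ 2 := by
  set h : ℝ → ℝ := fun t => F (w + t • v) - t * ⟪gradient F w, v⟫_ℝ - L * ‖v‖ ^ 2 * t ^ 2 / 2 with hh
  have hderiv : ∀ t : ℝ, HasDerivAt h
      (⟪gradient F (w + t • v), v⟫_ℝ - ⟪gradient F w, v⟫_ℝ - L * ‖v‖ ^ 2 * t) t := by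
    intro t
    have hline : HasDerivAt (fun t : ℝ => w + t • v) v t := by
      simpa using ((hasDerivAt_id t).smul_const v).const_add w
    have hF := (hdiff (w + t • v)).hasGradientAt
    have comp := hF.hasFDerivAt.comp_hasDerivAt t hline
    have h1 : HasDerivAt (fun t : ℝ => F (w + t • v)) ⟪gradient F (w + t • v), v⟫_ℝ t := by
      have hgv : ⟪gradient F (w + t • v), v⟫_ℝ = fderiv ℝ F (w + t • v) v := by simp
      rw [hgv]
      simpa [Function.comp_def] using comp
    have h2 : HasDerivAt (fun t : ℝ => t * ⟪gradient F w, v⟫_ℝ) ⟪gradient F w, v⟫_ℝ t := by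
      simpa using (hasDerivAt_id t).mul_const ⟪gradient F w, v⟫_ℝ
    have h3 : HasDerivAt (fun t : ℝ => L * ‖v‖ ^ 2 * t ^ 2 / 2) (L * ‖v‖ ^ 2 * t) t := by
      have := ((hasDerivAt_pow 2 t).const_mul (L * ‖v‖ ^ 2)).div_const 2
      exact this.congr_deriv (by push_cast; ring)
    exact (h1.sub h2).sub h3
  have hmono : AntitoneOn h (Set.Icc (0:ℝ) 1) := by
    apply antitoneOn_of_deriv_nonpos (convex_Icc 0 1)
    · exact (Continuous.continuousOn (by
        exact continuous_iff_continuousAt.2 fun t => (hderiv t).differentiableAt.continuousAt))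
    · exact fun t ht => ((hderiv t).differentiableAt).differentiableWithinAt
    · intro t ht
      rw [interior_Icc] at ht
      rw [(hderiv t).deriv]
      have key : ⟪gradient F (w + t • v) - gradient F w, v⟫_ℝ ≤ L * ‖v‖ ^ 2 * t := by
        calc ⟪gradient F (w + t • v) - gradient F w, v⟫_ℝ
            ≤ ‖gradient F (w + t • v) - gradient F w‖ * ‖v‖ := real_inner_le_norm _ _
          _ ≤ (L * ‖w + t • v - w‖) * ‖v‖ := by
              gcongr; exact hlip _ _
          _ = L * ‖v‖ ^ 2 * t := by
              simp [norm_smul, abs_of_pos ht.1]; ring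
      rw [inner_sub_left] at key
      linarith
  have h10 : h 1 ≤ h 0 := hmono (by norm_num) (by norm_num) zero_le_one
  simp only [hh] at h10
  norm_num at h10
  have hgv : ⟪gradient F w, v⟫_ℝ = fderiv ℝ F w v := by simp
  linarith

/-- One-step descent with a mixed gradient estimate
(key inequality in the proof of Theorem 1). -/
theorem one_step_mixed_gradient
    {E : Type*} [NormedAddCommGroup E] [InnerProductSpace ℝ E] [CompleteSpace E]
    (F : E → ℝ) (L μ : ℝ) (hL : 0 < L) (hμ : 0 < μ)
    (hdiff : Differentiable ℝ F)
    (hlip : ∀ w u : E, ‖gradient F w - gradient F u‖ ≤ L * ‖w - u‖)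
    (hFnonneg : ∀ w : E, 0 ≤ F w)
    (hPL : ∀ w : E, 2 * μ * F w ≤ ‖gradient F w‖ ^ 2)
    (G η : ℝ) (hG : 0 < G) (hη : 0 < η) (hηL : η * L ≤ 1)
    (b : ℝ) (hb : b ∈ Set.Icc (0 : ℝ) 1)
    (w ga gb : E) (hgrad : ‖gradient F w‖ ≤ G) (hgb : ‖gb‖ ≤ G) :
    F (w - η • ((1 - b) • ga + b • gb)) ≤
      (1 - η * μ) * F w + η / 2 * ((1 - b) * ‖gradient F w - ga‖ ^ 2 + 4 * b * G ^ 2) := by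
  obtain ⟨hb0, hb1⟩ := hb
  set g : E := (1 - b) • ga + b • gb with hg
  have hdesc := descent_lemma F L hL.le hdiff hlip w (-η • g)
  have hsub : w + (-η) • g = w - η • g := by module
  rw [hsub] at hdesc
  have hin : ⟪gradient F w, (-η) • g⟫_ℝ = -η * ⟪gradient F w, g⟫_ℝ := by
    rw [real_inner_smul_right]
  have hnv : ‖(-η) • g‖ ^ 2 = η ^ 2 * ‖g‖ ^ 2 := by
    rw [norm_smul, Real.norm_eq_abs, abs_neg, abs_of_pos hη, mul_pow]
  rw [hin, hnv] at hdesc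
  -- polarization
  have hpol : ‖gradient F w - g‖ ^ 2
      = ‖gradient F w‖ ^ 2 - 2 * ⟪gradient F w, g⟫_ℝ + ‖g‖ ^ 2 := by
    rw [@norm_sub_sq_real]
  -- step bound: L/2 * η² ‖g‖² ≤ η/2 ‖g‖²
  have hstep : L / 2 * (η ^ 2 * ‖g‖ ^ 2) ≤ η / 2 * ‖g‖ ^ 2 := by
    have h1 : η * L * (η * ‖g‖ ^ 2) ≤ 1 * (η * ‖g‖ ^ 2) := by
      apply mul_le_mul_of_nonneg_right hηL (by positivity)
    nlinarith
  have hPLw := hPL w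
  -- convexity bound
  have hconv : ‖gradient F w - g‖ ^ 2
      ≤ (1 - b) * ‖gradient F w - ga‖ ^ 2 + b * ‖gradient F w - gb‖ ^ 2 := by
    have hdecomp : gradient F w - g
        = (1 - b) • (gradient F w - ga) + b • (gradient F w - gb) := by
      rw [hg]; module
    have htri : ‖gradient F w - g‖
        ≤ (1 - b) * ‖gradient F w - ga‖ + b * ‖gradient F w - gb‖ := by
      rw [hdecomp]
      refine (norm_add_le _ _).trans ?_
      rw [norm_smul, norm_smul]
      simp [abs_of_nonneg hb0, abs_of_nonneg (by linarith : (0:ℝ) ≤ 1 - b)]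
    have hsq := pow_le_pow_left₀ (norm_nonneg (gradient F w - g)) htri 2
    nlinarith [hsq, mul_nonneg (mul_nonneg hb0 (by linarith : (0:ℝ) ≤ 1 - b))
      (sq_nonneg (‖gradient F w - ga‖ - ‖gradient F w - gb‖))]
  have hgbb : ‖gradient F w - gb‖ ^ 2 ≤ 4 * G ^ 2 := by
    have : ‖gradient F w - gb‖ ≤ 2 * G := (norm_sub_le _ _).trans (by linarith)
    nlinarith [norm_nonneg (gradient F w - gb)]
  have key : F (w - η • g) ≤ F w - η / 2 * ‖gradient F w‖ ^ 2
      + η / 2 * ‖gradient F w - g‖ ^ 2 := by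
    have heq : η / 2 * ‖gradient F w - g‖ ^ 2
        = η / 2 * ‖gradient F w‖ ^ 2 - η * ⟪gradient F w, g⟫_ℝ + η / 2 * ‖g‖ ^ 2 := by
      rw [hpol]; ring
    linarith [hdesc, hstep]
  have hPL2 : η * μ * F w ≤ η / 2 * ‖gradient F w‖ ^ 2 := by
    have := mul_le_mul_of_nonneg_left hPLw (by positivity : (0:ℝ) ≤ η / 2)
    linarith [this]
  have hmix : η / 2 * ‖gradient F w - g‖ ^ 2
      ≤ η / 2 * ((1 - b) * ‖gradient F w - ga‖ ^ 2 + 4 * b * G ^ 2) := by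
    have h4 := mul_le_mul_of_nonneg_left hgbb hb0
    have : ‖gradient F w - g‖ ^ 2
        ≤ (1 - b) * ‖gradient F w - ga‖ ^ 2 + 4 * b * G ^ 2 := by linarith [hconv, h4]
    have := mul_le_mul_of_nonneg_left this (by positivity : (0:ℝ) ≤ η / 2)
    linarith [this]
  linarith [key, hPL2, hmix]
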